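/- Let I be a small category, E a category, and F: E → Cat a (pseudo)functor such that: (1) E has limits of shape I; (2) for each object e ∈ E, the category F(e) has limits of shape I; (3) for each morphism f: e → e' in E, the functor F(f): F(e) → F(e') has a right adjoint. Then the Grothendieck construction ∫F has limits of shape I. -/

import Mathlib

open CategoryTheory CategoryTheory.Limits TopologicalSpace

attribute [local instance] CategoryTheory.ConcreteCategory.instFunLike

universe w' w v u v₂ u₂ v₁ u₁

namespace ProfiniteCosheaves

variable {C : Type u₂} [Category.{v₂} C]

/-- The canonical binary cofan `A(U) → A(U ⊔ V) ← A(V)` of a precosheaf `A` at a pair of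
clopen subsets. -/
def cosheafCofan {X : Type*} [TopologicalSpace X] (A : Clopens X ⥤ C) (U V : Clopens X) :
    BinaryCofan (A.obj U) (A.obj V) :=
  BinaryCofan.mk (A.map (homOfLE le_sup_left : U ⟶ U ⊔ V)) (A.map (homOfLE le_sup_right))

/-- A precosheaf (a functor on the poset of clopen subsets) is a cosheaf if its value at `∅`
is initial and, for disjoint clopens `U, V`, the canonical cofan exhibits `A(U ⊔ V)` as the
coproduct `A(U) ⨿ A(V)`. -/
structure IsCosheaf {X : Type*} [TopologicalSpace X] (A : Clopens X ⥤ C) : Prop where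
  initial : Nonempty (IsInitial (A.obj ⊥))
  binary : ∀ U V : Clopens X, Disjoint U V → Nonempty (IsColimit (cosheafCofan A U V))

/-- The category `CoSh(X, C)` of cosheaves over a profinite space `X` valued in `C`. -/
def CoSheaf (X : Profinite.{u}) (C : Type u₂) [Category.{v₂} C] :=
  ObjectProperty.FullSubcategory (fun A : Clopens X ⥤ C => IsCosheaf A)

instance (X : Profinite.{u}) : Category (CoSheaf X C) := ObjectProperty.FullSubcategory.category _

/-- Preimage of clopen subsets along a continuous map, as a functor. -/
def clopensComap {X Y : Profinite.{u}} (f : X ⟶ Y) : Clopens Y ⥤ Clopens X where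
  obj U := ⟨f ⁻¹' (U : Set Y), U.isClopen.preimage f.hom.hom.continuous⟩
  map {U V} h := homOfLE (fun x hx => leOfHom h hx)

theorem IsCosheaf.comap {X Y : Profinite.{u}} (f : X ⟶ Y) {A : Clopens X ⥤ C}
    (hA : IsCosheaf A) : IsCosheaf (clopensComap f ⋙ A) := by
  constructor
  · have e : (clopensComap f).obj ⊥ = ⊥ := by
      apply SetLike.ext'
      simp [clopensComap]
    exact ⟨hA.initial.some.ofIso (A.mapIso (eqToIso e.symm))⟩
  · intro U V hUV
    have hUV' : Disjoint ((clopensComap f).obj U) ((clopensComap f).obj V) := by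
      rw [disjoint_iff] at hUV ⊢
      have h0 : (U : Set (Y : Type u)) ∩ (V : Set (Y : Type u)) = ∅ := by
        have := congrArg (fun W : Clopens (Y : Type u) => (W : Set (Y : Type u))) hUV
        simpa using this
      apply SetLike.ext'
      exact Set.preimage_inter.symm.trans ((congrArg _ h0).trans Set.preimage_empty)
    obtain ⟨h⟩ := hA.binary _ _ hUV'
    have e : (clopensComap f).obj U ⊔ (clopensComap f).obj V = (clopensComap f).obj (U ⊔ V) := by
      apply SetLike.ext'
      exact Set.preimage_union.symm
    refine ⟨h.ofIsoColimit (Cocones.ext (A.mapIso (eqToIso e)) ?_)⟩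
    rintro ⟨⟨⟩⟩ <;>
      · dsimp [cosheafCofan]
        exact (A.map_comp _ _).symm

/-- The direct image functor `f_* : CoSh(X, C) ⥤ CoSh(Y, C)`, `A ↦ A ∘ f⁻¹`. -/
def coshMapFun {X Y : Profinite.{u}} (f : X ⟶ Y) : CoSheaf X C ⥤ CoSheaf Y C :=
  ObjectProperty.lift _
    (ObjectProperty.ι _ ⋙ (Functor.whiskeringLeft (Clopens Y) (Clopens X) C).obj (clopensComap f))
    (fun A => A.property.comap f)

/-- The functor `Profinite ⥤ Cat` sending `X` to the category of cosheaves on `X` valued in `C`,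
and a continuous map to the direct image functor. -/
def coshFunctor (C : Type u₂) [Category.{v₂} C] : Profinite.{u} ⥤ Cat where
  obj X := Cat.of (CoSheaf X C)
  map f := (coshMapFun f).toCatHom
  map_id _ := rfl
  map_comp f g := by
    apply Cat.Hom.ext
    rfl

/-- The total category `CoSh(C)` of profinite cosheaves valued in `C`, i.e. the Grothendieck
construction of `X ↦ CoSh(X, C)`. Objects are pairs `(X, A)` with `A` a cosheaf on `X`;
a morphism `(X, A) ⟶ (Y, B)` is a pair `(f, φ)` with `f : X ⟶ Y` continuous and
`φ : A ∘ f⁻¹ ⟶ B`. -/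
def CoSh (C : Type u₂) [Category.{v₂} C] :=
  Grothendieck (coshFunctor.{u} C)

instance : Category (CoSh.{u} C) := inferInstanceAs (Category (Grothendieck _))

/-- The global cosections functor `CoSh(C) ⥤ C`, `(A, X) ↦ A(X)`. -/
def globalCosections (C : Type u₂) [Category.{v₂} C] : CoSh.{u} C ⥤ C where
  obj P := (P.fiber : CoSheaf P.base C).obj.obj ⊤
  map {P Q} g :=
    (P.fiber : CoSheaf P.base C).obj.map (homOfLE (fun x _ => Set.mem_univ _) : (⊤ : Clopens P.base) ⟶ _) ≫
      NatTrans.app (InducedCategory.Hom.hom g.fiber) ⊤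
  map_id := by
    intro P
    erw [CategoryTheory.Functor.map_id]
    exact Category.id_comp _
  map_comp := by
    intro P Q R f g
    erw [CategoryTheory.Functor.map_id]
    erw [CategoryTheory.Functor.map_id]
    refine (Category.id_comp _).trans ?_
    refine Eq.trans ?_ (congrArg₂ (· ≫ ·) (Category.id_comp _).symm (Category.id_comp _).symm)
    show (Grothendieck.comp f g).fiber.hom.app ⊤ = _
    exact Category.id_comp (f.fiber.hom.app ⊤ ≫ g.fiber.hom.app ⊤)

/-- The poset of clopen neighbourhoods of a point, as a category. -/
def Nbhds (X : Profinite.{u}) (x : X) := ObjectProperty.FullSubcategory (fun U : Clopens X => x ∈ U)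

instance (X : Profinite.{u}) (x : X) : Category (Nbhds X x) := ObjectProperty.FullSubcategory.category _

/-- The diagram of values of `A` on the clopen neighbourhoods of `x`; the costalk of `A` at `x`
is its (inverse) limit. -/
def costalkDiagram {X : Profinite.{u}} (A : Clopens X ⥤ C) (x : X) : Nbhds X x ⥤ C :=
  ObjectProperty.ι _ ⋙ A

/-- The costalk `A_x = lim_{V ∋ x} A(V)` of a precosheaf at a point. -/
noncomputable def costalk {X : Profinite.{u}} (A : Clopens X ⥤ C) (x : X)
    [HasLimit (costalkDiagram A x)] : C :=
  limit (costalkDiagram A x)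

/-- `c` is *a* costalk of `A` at `x` if the costalk diagram of `A` at `x` admits a limit cone
whose point is isomorphic to `c`. -/
def IsCostalk {X : Profinite.{u}} (A : Clopens X ⥤ C) (x : X) (c : C) : Prop :=
  ∃ t : Cone (costalkDiagram A x), Nonempty (IsLimit t) ∧ Nonempty (t.pt ≅ c)

/-- The pro-completion of a category: the free completion under cofiltered limits, realised
concretely as the opposite of the category of left-exact functors to `Type`. -/
def ProCompletion (E : Type u₁) [Category.{v₁} E] :=
  (ObjectProperty.FullSubcategory fun F : E ⥤ Type v₁ => Nonempty (PreservesFiniteLimits F))ᵒᵖ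

instance (E : Type u₁) [Category.{v₁} E] : Category (ProCompletion E) :=
  inferInstanceAs (Category (ObjectProperty.FullSubcategory _)ᵒᵖ)

/-- The canonical (co-Yoneda) embedding of a category into its pro-completion. -/
def proEmbedding (E : Type u₁) [Category.{v₁} E] : E ⥤ ProCompletion E where
  obj e := Opposite.op ⟨coyoneda.obj (Opposite.op e), ⟨inferInstance⟩⟩
  map {e e'} f := Quiver.Hom.op
    (show (⟨coyoneda.obj (Opposite.op e'), ⟨inferInstance⟩⟩ : ObjectProperty.FullSubcategory _) ⟶
        ⟨coyoneda.obj (Opposite.op e), ⟨inferInstance⟩⟩ from ObjectProperty.homMk (coyoneda.map f.op))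

/-- A regular category: it has finite limits, coequalisers of kernel pairs, and regular
epimorphisms are stable under pullback. -/
class IsRegularCategory (C : Type u₂) [Category.{v₂} C] : Prop where
  hasFiniteLimits : HasFiniteLimits C
  hasCoeqOfKernelPairs : ∀ {R X Y : C} (f : X ⟶ Y) (a b : R ⟶ X),
    IsPullback a b f f → HasCoequalizer a b
  regularEpi_stable : ∀ {P X Y Z : C} (f : X ⟶ Z) (g : Y ⟶ Z) (p₁ : P ⟶ X) (p₂ : P ⟶ Y),
    IsPullback p₁ p₂ f g → Nonempty (RegularEpi f) → Nonempty (RegularEpi p₂)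

/-- `D` is closed under subobjects in its pro-completion: any subobject (in `Pro(D)`) of an
object of `D` is isomorphic to an object of `D`. -/
def ClosedUnderSubobjects (D : Type u) [SmallCategory D] : Prop :=
  ∀ (d : D) (c : ProCompletion D) (m : c ⟶ (proEmbedding D).obj d), Mono m →
    ∃ d' : D, Nonempty (c ≅ (proEmbedding D).obj d')

/-- The coprojection maps into binary coproducts are monomorphisms. -/
def MonoCoprojections (C : Type u₂) [Category.{v₂} C] : Prop :=
  ∀ (a b p : C) (inl : a ⟶ p) (inr : b ⟶ p),
    Nonempty (IsColimit (BinaryCofan.mk inl inr)) → Mono inl ∧ Mono inr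

/-- Cofiltered limits commute with finite colimits in `C`: for every finite category `J`,
the colimit functor `(J ⥤ C) ⥤ C` preserves cofiltered limits (of shapes of size `w`). -/
def CofilteredLimitsCommuteWithFiniteColimits (C : Type u₂) [Category.{v₂} C]
    [HasFiniteColimits C] : Prop :=
  ∀ (J : Type) [SmallCategory J] [FinCategory J] (K : Type w) [SmallCategory K] [IsCofiltered K],
    PreservesLimitsOfShape K (colim (J := J) (C := C))

/-- The full subcategory of "finite objects" of `CoSh(Pro(D))`: cosheaves `(A, X)` with `X`
finite such that every costalk of `A` lies in (the image of) `D`. -/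
def CoShFinProp (D : Type u) [SmallCategory D] (P : CoSh.{u} (ProCompletion D)) : Prop :=
  Finite (P.base : Type u) ∧
    ∀ x : P.base, ∃ d : D, IsCostalk (P.fiber : CoSheaf P.base (ProCompletion D)).obj x ((proEmbedding D).obj d)

/-- The category `CoSh(Pro(D))_fin` of finite cosheaf objects. -/
def CoShFin (D : Type u) [SmallCategory D] := ObjectProperty.FullSubcategory (CoShFinProp D)

instance (D : Type u) [SmallCategory D] : Category (CoShFin D) := ObjectProperty.FullSubcategory.category _

end ProfiniteCosheaves

namespace ProfiniteCosheaves

namespace GrothLimAux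
set_option linter.unusedSectionVars false


lemma fiber_congr {E : Type u₁} [Category.{v₁} E] {F : E ⥤ Cat.{v₂, u₂}}
    {X Y : Grothendieck F} {f g : X ⟶ Y} (h : f = g) :
    f.fiber = eqToHom (by rw [h]) ≫ g.fiber := by subst h; simp

variable {E : Type u₁} [Category.{v₁} E] {I : Type w} [SmallCategory I]
variable {F : E ⥤ Cat.{v₂, u₂}}
variable (R : ∀ {e e' : E}, (e ⟶ e') → (↑(F.obj e') ⥤ ↑(F.obj e)))
variable (adj : ∀ {e e' : E} (f : e ⟶ e'), (F.map f).toFunctor ⊣ R f)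
/-- The base diagram, with objects reducibly `(G.obj i).base`. -/
abbrev baseDiag (G : I ⥤ Grothendieck F) : I ⥤ E where
  obj i := (G.obj i).base
  map f := (G.map f).base
  map_id i := by rw [G.map_id]; rfl
  map_comp f g := by rw [G.map_comp]; rfl

variable (G : I ⥤ Grothendieck F)
variable (c : Cone (baseDiag G))

lemma mapπ_eq {i j : I} (f : i ⟶ j) :
    (F.map (c.π.app j)).toFunctor = (F.map (c.π.app i)).toFunctor ⋙ (F.map ((G.map f).base)).toFunctor := by
  rw [← c.w f, F.map_comp]; rfl

/-- The argument of the adjunction equivalence defining the fiber diagram maps. -/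
def fibArg {i j : I} (f : i ⟶ j) :
    ((F.map (c.π.app j)).toFunctor).obj ((R (c.π.app i)).obj (G.obj i).fiber) ⟶ (G.obj j).fiber :=
  eqToHom (Functor.congr_obj (mapπ_eq G c f) _) ≫
    ((F.map ((G.map f).base)).toFunctor).map ((adj (c.π.app i)).counit.app (G.obj i).fiber) ≫
    (G.map f).fiber

/-- The map of the fiber diagram. -/
def fibMap {i j : I} (f : i ⟶ j) :
    (R (c.π.app i)).obj (G.obj i).fiber ⟶ (R (c.π.app j)).obj (G.obj j).fiber :=
  ((adj (c.π.app j)).homEquiv _ _) (fibArg R adj G c f)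

/-- The diagram in the fiber over the limit of the base diagram. -/
def fibDiag : I ⥤ ↑(F.obj c.pt) where
  obj i := (R (c.π.app i)).obj (G.obj i).fiber
  map {i j} f := fibMap R adj G c f
  map_id i := by
    dsimp only [fibMap]
    apply ((adj (c.π.app i)).homEquiv _ _).symm.injective
    rw [Equiv.symm_apply_apply, Adjunction.homEquiv_counit]
    have h1 := fiber_congr (G.map_id i)
    have h2 : (F.map ((G.map (𝟙 i)).base)).toFunctor = 𝟭 _ := by
      rw [show (G.map (𝟙 i)).base = 𝟙 _ by rw [G.map_id]; rfl, F.map_id]; rfl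
    rw [fibArg, h1, Functor.congr_hom h2]
    simp
  map_comp {i j k} f g := by
    dsimp only [fibMap]
    rw [← Adjunction.homEquiv_naturality_left]
    congr 1
    set X := ((adj (c.π.app j)).homEquiv ((R (c.π.app i)).obj (G.obj i).fiber) (G.obj j).fiber)
      (fibArg R adj G c f) with hX
    have hDf : ((F.map (c.π.app j)).toFunctor).map X ≫ (adj (c.π.app j)).counit.app (G.obj j).fiber
        = fibArg R adj G c f := by
      rw [hX]
      exact ((adj (c.π.app j)).homEquiv ((R (c.π.app i)).obj (G.obj i).fiber) (G.obj j).fiber).symm_apply_apply (fibArg R adj G c f)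
    have hk := Functor.congr_hom (mapπ_eq G c g) X
    have hbase : (F.map ((G.map (f ≫ g)).base)).toFunctor =
        (F.map ((G.map f).base)).toFunctor ⋙ (F.map ((G.map g).base)).toFunctor := by
      rw [G.map_comp]; exact congrArg Cat.Hom.toFunctor (F.map_comp _ _)
    rw [hk]
    conv_lhs => rw [fibArg, fiber_congr (G.map_comp f g), Functor.congr_hom hbase]
    conv_rhs => rw [fibArg]
    simp only [Functor.comp_map, Category.assoc, eqToHom_trans_assoc, eqToHom_refl,
      Category.id_comp, Grothendieck.comp_fiber, Functor.map_comp, eqToHom_map]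
    rw [show ((F.map ((G.map g).base)).toFunctor).map (((F.map (c.π.app j)).toFunctor).map X) ≫
        ((F.map ((G.map g).base)).toFunctor).map ((adj (c.π.app j)).counit.app (G.obj j).fiber) ≫
        (G.map g).fiber =
        ((F.map ((G.map g).base)).toFunctor).map (fibArg R adj G c f) ≫ (G.map g).fiber from by
      rw [← Functor.map_comp_assoc, hDf]]
    rw [fibArg]
    simp [eqToHom_map]

attribute [reducible] fibDiag

lemma counit_fibMap {i j : I} (f : i ⟶ j) :
    (((F.map (c.π.app j)).toFunctor).map (fibMap R adj G c f) ≫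
      (adj (c.π.app j)).counit.app (G.obj j).fiber :
        ((F.map (c.π.app j)).toFunctor).obj ((R (c.π.app i)).obj (G.obj i).fiber) ⟶ (G.obj j).fiber)
      = fibArg R adj G c f :=
  ((adj (c.π.app j)).homEquiv ((R (c.π.app i)).obj (G.obj i).fiber)
    (G.obj j).fiber).symm_apply_apply (fibArg R adj G c f)

@[simp] lemma fibDiag_map {i j : I} (f : i ⟶ j) :
    (fibDiag R adj G c).map f = fibMap R adj G c f := rfl

variable [HasLimit (fibDiag R adj G c)]

/-- The candidate limit object. -/
noncomputable def limPt : Grothendieck F :=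
  ⟨c.pt, limit (fibDiag R adj G c)⟩

/-- The legs of the candidate limit cone. -/
noncomputable def limLeg (i : I) : limPt R adj G c ⟶ G.obj i :=
  ⟨c.π.app i, ((F.map (c.π.app i)).toFunctor).map (limit.π (fibDiag R adj G c) i) ≫
    (adj (c.π.app i)).counit.app (G.obj i).fiber⟩

attribute [reducible] limPt limLeg

lemma limLeg_w {i j : I} (f : i ⟶ j) :
    limLeg R adj G c i ≫ G.map f = limLeg R adj G c j := by
  apply Grothendieck.ext
  case w_base => exact c.w f
  case w_fiber =>
    show eqToHom _ ≫ (limLeg R adj G c i ≫ G.map f).fiber = _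
    rw [Grothendieck.comp_fiber]
    show _ = ((F.map (c.π.app j)).toFunctor).map (limit.π (fibDiag R adj G c) j) ≫ _
    rw [← limit.w (fibDiag R adj G c) f]
    dsimp only
    simp only [Functor.map_comp, Category.assoc]
    rw [counit_fibMap, Functor.congr_hom (mapπ_eq G c f) _, fibArg]
    simp [eqToHom_map]
    erw [eqToHom_trans_assoc]

/-- The candidate limit cone. -/
noncomputable def limCone : Cone G where
  pt := limPt R adj G c
  π :=
    { app := limLeg R adj G c
      naturality := fun i j f => by
        simp only [Functor.const_obj_map, limLeg_w]
        exact Category.id_comp _ }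

section IsLimit

variable (hc : IsLimit c) (s : Cone G)

/-- Base component of the lift. -/
noncomputable def liftBase : s.pt.base ⟶ c.pt :=
  hc.lift ((Grothendieck.forget F).mapCone s)

lemma liftBase_fac (i : I) : liftBase G c hc s ≫ c.π.app i = (s.π.app i).base :=
  hc.fac ((Grothendieck.forget F).mapCone s) i

lemma liftFun_eq (i : I) :
    (F.map (liftBase G c hc s)).toFunctor ⋙ (F.map (c.π.app i)).toFunctor = (F.map ((s.π.app i).base)).toFunctor := by
  rw [← liftBase_fac G c hc s i]; exact (congrArg Cat.Hom.toFunctor (F.map_comp _ _)).symm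

/-- Argument for the legs of the comparison cone in the fiber. -/
noncomputable def liftArg (i : I) :
    ((F.map (c.π.app i)).toFunctor).obj (((F.map (liftBase G c hc s)).toFunctor).obj s.pt.fiber) ⟶ (G.obj i).fiber :=
  eqToHom (Functor.congr_obj (liftFun_eq G c hc s i) s.pt.fiber) ≫ (s.π.app i).fiber

/-- Leg of the comparison cone in the fiber. -/
noncomputable def liftLeg (i : I) :
    ((F.map (liftBase G c hc s)).toFunctor).obj s.pt.fiber ⟶ (fibDiag R adj G c).obj i :=
  ((adj (c.π.app i)).homEquiv (((F.map (liftBase G c hc s)).toFunctor).obj s.pt.fiber) (G.obj i).fiber)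
    (liftArg G c hc s i)

lemma counit_liftLeg (i : I) :
    (((F.map (c.π.app i)).toFunctor).map (liftLeg R adj G c hc s i) ≫
      (adj (c.π.app i)).counit.app (G.obj i).fiber :
        ((F.map (c.π.app i)).toFunctor).obj (((F.map (liftBase G c hc s)).toFunctor).obj s.pt.fiber) ⟶ (G.obj i).fiber)
      = liftArg G c hc s i :=
  ((adj (c.π.app i)).homEquiv (((F.map (liftBase G c hc s)).toFunctor).obj s.pt.fiber)
    (G.obj i).fiber).symm_apply_apply (liftArg G c hc s i)

lemma liftLeg_w {i j : I} (f : i ⟶ j) :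
    liftLeg R adj G c hc s i ≫ fibMap R adj G c f = liftLeg R adj G c hc s j := by
  have hnat := Adjunction.homEquiv_naturality_left (adj := adj (c.π.app j))
    (liftLeg R adj G c hc s i) (fibArg R adj G c f)
  show liftLeg R adj G c hc s i ≫
    ((adj (c.π.app j)).homEquiv ((fibDiag R adj G c).obj i) (G.obj j).fiber)
      (fibArg R adj G c f) = liftLeg R adj G c hc s j
  rw [← hnat]
  conv_rhs => rw [liftLeg]
  congr 1
  rw [Functor.congr_hom (mapπ_eq G c f) (liftLeg R adj G c hc s i), fibArg]
  simp only [Functor.comp_map, Category.assoc, eqToHom_trans_assoc, eqToHom_refl,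
    Category.id_comp]
  rw [show ((F.map ((G.map f).base)).toFunctor).map (((F.map (c.π.app i)).toFunctor).map (liftLeg R adj G c hc s i)) ≫
      ((F.map ((G.map f).base)).toFunctor).map ((adj (c.π.app i)).counit.app (G.obj i).fiber) ≫
      (G.map f).fiber =
      ((F.map ((G.map f).base)).toFunctor).map (liftArg G c hc s i) ≫ (G.map f).fiber from by
    rw [← Functor.map_comp_assoc, counit_liftLeg]]
  rw [liftArg, liftArg, fiber_congr (s.w f).symm, Grothendieck.comp_fiber]
  simp [eqToHom_map]
  erw [eqToHom_trans_assoc, eqToHom_trans_assoc]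

attribute [reducible] liftBase

/-- The comparison cone in the fiber. -/
noncomputable def liftCone : Cone (fibDiag R adj G c) where
  pt := ((F.map (liftBase G c hc s)).toFunctor).obj s.pt.fiber
  π :=
    { app := liftLeg R adj G c hc s
      naturality := fun i j f => by
        simp only [Functor.const_obj_map, fibDiag_map, liftLeg_w]
        exact Category.id_comp _ }

/-- The lift. -/
noncomputable def limLift : s.pt ⟶ limPt R adj G c :=
  ⟨liftBase G c hc s, limit.lift (fibDiag R adj G c) (liftCone R adj G c hc s)⟩

attribute [reducible] limLift

@[simp] lemma limLeg_base (i : I) : (limLeg R adj G c i).base = c.π.app i := rfl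

@[simp] lemma limLeg_fiber (i : I) : (limLeg R adj G c i).fiber =
    ((F.map (c.π.app i)).toFunctor).map (limit.π (fibDiag R adj G c) i) ≫
      (adj (c.π.app i)).counit.app (G.obj i).fiber := rfl

@[simp] lemma limLift_base : (limLift R adj G c hc s).base = liftBase G c hc s := rfl

@[simp] lemma limLift_fiber : (limLift R adj G c hc s).fiber =
    limit.lift (fibDiag R adj G c) (liftCone R adj G c hc s) := rfl

@[simp] lemma liftCone_π_app (i : I) :
    (liftCone R adj G c hc s).π.app i = liftLeg R adj G c hc s i := rfl

lemma limLift_fac (i : I) : limLift R adj G c hc s ≫ limLeg R adj G c i = s.π.app i := by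
  apply Grothendieck.ext
  case w_base => exact liftBase_fac G c hc s i
  case w_fiber =>
    rw [Grothendieck.comp_fiber]
    simp only [limLeg_base, limLeg_fiber, limLift_base, limLift_fiber, Category.assoc]
    erw [← Functor.map_comp_assoc (F.map (c.π.app i)).toFunctor, limit.lift_π]
    rw [liftCone_π_app, counit_liftLeg, liftArg]
    simp
    erw [eqToHom_trans_assoc, eqToHom_trans_assoc, eqToHom_refl, Category.id_comp]

lemma limLift_uniq (m : s.pt ⟶ limPt R adj G c)
    (hm : ∀ i, m ≫ limLeg R adj G c i = s.π.app i) : m = limLift R adj G c hc s := by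
  apply Grothendieck.ext
  case w_base =>
    exact hc.uniq ((Grothendieck.forget F).mapCone s) m.base
      (fun i => congrArg Grothendieck.Hom.base (hm i))
  case w_fiber =>
    show eqToHom _ ≫ m.fiber = limit.lift (fibDiag R adj G c) (liftCone R adj G c hc s)
    apply limit.hom_ext
    intro i
    rw [limit.lift_π, liftCone_π_app]
    apply ((adj (c.π.app i)).homEquiv (((F.map (liftBase G c hc s)).toFunctor).obj s.pt.fiber)
      (G.obj i).fiber).symm.injective
    rw [liftLeg, Equiv.symm_apply_apply]
    show ((F.map (c.π.app i)).toFunctor).map ((eqToHom _ ≫ m.fiber) ≫ limit.π (fibDiag R adj G c) i) ≫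
      (adj (c.π.app i)).counit.app (G.obj i).fiber = liftArg G c hc s i
    have hfib := fiber_congr (hm i)
    rw [Grothendieck.comp_fiber] at hfib
    simp only [limLeg_base, limLeg_fiber, Category.assoc] at hfib
    rw [eqToHom_comp_iff] at hfib
    rw [liftArg]
    simp only [Functor.map_comp, Category.assoc, eqToHom_map]
    rw [hfib]
    simp
    erw [eqToHom_trans_assoc, eqToHom_trans_assoc]

end IsLimit

/-- The limit cone is a limit. -/
noncomputable def limConeIsLimit (hc : IsLimit c) : IsLimit (limCone R adj G c) where
  lift s := limLift R adj G c hc s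
  fac s i := limLift_fac R adj G c hc s i
  uniq s m hm := limLift_uniq R adj G c hc s m hm

end GrothLimAux

/-- **Statement 11.** Let `I` be a small category, `E` a category and `F : E ⥤ Cat` a functor
such that `E` has `I`-limits, each fibre `F(e)` has `I`-limits, and each `F(f)` has a right
adjoint. Then the Grothendieck construction `∫ F` has `I`-limits. -/
theorem grothendieck_hasLimitsOfShape {E : Type u₁} [Category.{v₁} E] (I : Type w)
    [SmallCategory I] (F : E ⥤ Cat.{v₂, u₂}) [HasLimitsOfShape I E]
    (h2 : ∀ e : E, HasLimitsOfShape I (F.obj e))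
    (h3 : ∀ {e e' : E} (f : e ⟶ e'), ∃ R : ↑(F.obj e') ⥤ ↑(F.obj e),
      Nonempty ((F.map f).toFunctor ⊣ R)) :
    HasLimitsOfShape I (Grothendieck F) := by
  constructor
  intro G
  have h3' : ∀ (e e' : E) (f : e ⟶ e'), ∃ R' : ↑(F.obj e') ⥤ ↑(F.obj e),
      Nonempty ((F.map f).toFunctor ⊣ R') := fun _ _ f => h3 f
  choose Rc hR using h3'
  let R : ∀ {e e' : E}, (e ⟶ e') → (↑(F.obj e') ⥤ ↑(F.obj e)) := fun {e e'} f => Rc e e' f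
  let adj : ∀ {e e' : E} (f : e ⟶ e'), (F.map f).toFunctor ⊣ R f := fun {e e'} f => (hR e e' f).some
  let c := limit.cone (GrothLimAux.baseDiag G)
  haveI := h2 c.pt
  exact HasLimit.mk ⟨GrothLimAux.limCone R adj G c,
    GrothLimAux.limConeIsLimit R adj G c (limit.isLimit _)⟩

end ProfiniteCosheaves
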